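/- Let {μ_m^i}_{m ∈ M_i} be families of Borel measures on metric spaces (M_i, d_i), 1 ≤ i ≤ N, each satisfying the uniform doubling condition μ_m(B_{2R}(m)) ≤ D_i μ_m(B_R(m)). On the p-direct sum M := ⊕_p M_i (with metric d(m,m') = (Σ d_i(m_i,m_i')^p)^{1/p}), the tensor-product measures μ_m := ⊗_{i=1}^N μ_{m_i}^i satisfy μ_m(B_{2R}(m)) ≤ (∏_{i=1}^N D_i) μ_m(B_R(m)) for all m ∈ M and R > 0. -/

import Mathlib

open MeasureTheory Set Function Filter
open scoped ENNReal

namespace Stmt15Aux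

section Envelope

variable {α : Type*} [MeasurableSpace α] [MetricSpace α]

/-- A measurable envelope of the distance function to `m₀` from below, whose sublevel
sets have the same measure as the corresponding balls. -/
theorem exists_envelope (μ : Measure α) (m₀ : α) :
    ∃ (g : α → ℝ) (W : ℚ → Set α),
      Measurable g ∧ (∀ x, 0 ≤ g x) ∧ (∀ x, g x ≤ dist m₀ x) ∧
      (∀ r : ℝ, μ {x | g x < r} = μ (Metric.ball m₀ r)) ∧
      (∀ q : ℚ, W q ⊆ toMeasurable μ (Metric.ball m₀ (q : ℝ))) ∧
      (∀ (x : α) (r : ℝ), g x < r → ∃ q : ℚ, 0 ≤ (q : ℝ) ∧ (q : ℝ) < r ∧ x ∈ W q) := by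
  set W : ℚ → Set α :=
    fun q => ⋂ (q' : ℚ) (_ : q ≤ q'), toMeasurable μ (Metric.ball m₀ (q' : ℝ)) with hW
  have hWmono : ∀ q q' : ℚ, q ≤ q' → W q ⊆ W q' := by
    intro q q' h x hx
    simp only [hW, mem_iInter] at hx ⊢
    exact fun q'' h'' => hx q'' (h.trans h'')
  have hballW : ∀ q : ℚ, Metric.ball m₀ (q : ℝ) ⊆ W q := by
    intro q
    simp only [hW, subset_iInter_iff]
    intro q' hq'
    exact (Metric.ball_subset_ball (by exact_mod_cast hq')).trans (subset_toMeasurable μ _)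
  have hWtm : ∀ q : ℚ, W q ⊆ toMeasurable μ (Metric.ball m₀ (q : ℝ)) := by
    intro q x hx
    simp only [hW, mem_iInter] at hx
    exact hx q le_rfl
  have hWmeas : ∀ q, MeasurableSet (W q) := fun q =>
    MeasurableSet.iInter fun q' => MeasurableSet.iInter fun _ => measurableSet_toMeasurable μ _
  set S : α → Set ℝ := fun x => {t : ℝ | ∃ q : ℚ, (q : ℝ) = t ∧ 0 ≤ (q : ℝ) ∧ x ∈ W q} with hS
  have hSne : ∀ x, (S x).Nonempty := by
    intro x
    obtain ⟨q, hq⟩ := exists_rat_gt (dist x m₀)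
    exact ⟨q, q, rfl, (dist_nonneg.trans_lt hq).le,
      hballW q (by simpa [Metric.mem_ball] using hq)⟩
  have hSbdd : ∀ x, BddBelow (S x) := fun x => ⟨0, by rintro t ⟨q, rfl, hq0, _⟩; exact hq0⟩
  set g : α → ℝ := fun x => sInf (S x) with hg
  have hg0 : ∀ x, 0 ≤ g x := fun x =>
    le_csInf (hSne x) (by rintro t ⟨q, rfl, hq0, _⟩; exact hq0)
  have hmemle : ∀ (x) (q : ℚ), 0 ≤ (q : ℝ) → x ∈ W q → g x ≤ (q : ℝ) := fun x q h0 hx =>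
    csInf_le (hSbdd x) ⟨q, rfl, h0, hx⟩
  have hgle : ∀ x, g x ≤ dist m₀ x := by
    intro x
    by_contra h
    push_neg at h
    obtain ⟨q, hq1, hq2⟩ := exists_rat_btwn h
    have h0 : 0 ≤ (q : ℝ) := le_of_lt (lt_of_le_of_lt dist_nonneg hq1)
    have hx : x ∈ W q := hballW q (by rw [Metric.mem_ball, dist_comm]; exact hq1)
    exact absurd (hmemle x q h0 hx) (not_le.mpr hq2)
  have hsub : ∀ (x) (r : ℝ), g x < r → ∃ q : ℚ, 0 ≤ (q : ℝ) ∧ (q : ℝ) < r ∧ x ∈ W q := by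
    intro x r h
    obtain ⟨t, ⟨q, rfl, hq0, hqW⟩, htr⟩ := exists_lt_of_csInf_lt (hSne x) h
    exact ⟨q, hq0, htr, hqW⟩
  have hsublevel : ∀ r : ℝ,
      {x | g x < r} = ⋃ q : {q : ℚ // 0 ≤ (q : ℝ) ∧ (q : ℝ) < r}, W q.1 := by
    intro r
    ext x
    simp only [mem_setOf_eq, mem_iUnion]
    constructor
    · intro h
      obtain ⟨q, hq0, hqr, hqW⟩ := hsub x r h
      exact ⟨⟨q, hq0, hqr⟩, hqW⟩
    · rintro ⟨⟨q, hq0, hqr⟩, hqW⟩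
      exact lt_of_le_of_lt (hmemle x q hq0 hqW) hqr
  refine ⟨g, W, ?_, hg0, hgle, ?_, hWtm, hsub⟩
  · apply measurable_of_Iio
    intro r
    have h : g ⁻¹' Iio r = {x | g x < r} := rfl
    rw [h, hsublevel r]
    exact MeasurableSet.iUnion fun q => hWmeas q.1
  · intro r
    apply le_antisymm
    · rw [hsublevel r]
      rcases isEmpty_or_nonempty {q : ℚ // 0 ≤ (q : ℝ) ∧ (q : ℝ) < r} with hE | hNE
      · simp
      · have hdir : Directed (· ⊆ ·) fun q : {q : ℚ // 0 ≤ (q : ℝ) ∧ (q : ℝ) < r} => W q.1 := by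
          intro q q'
          refine ⟨⟨max q.1 q'.1, ?_, ?_⟩,
            hWmono _ _ (le_max_left _ _), hWmono _ _ (le_max_right _ _)⟩
          · push_cast
            exact le_max_of_le_left q.2.1
          · push_cast
            exact max_lt q.2.2 q'.2.2
        rw [hdir.measure_iUnion]
        apply iSup_le
        intro q
        calc μ (W q.1) ≤ μ (toMeasurable μ (Metric.ball m₀ (q.1 : ℝ))) :=
              measure_mono (hWtm q.1)
          _ = μ (Metric.ball m₀ (q.1 : ℝ)) := measure_toMeasurable _
          _ ≤ μ (Metric.ball m₀ r) := measure_mono (Metric.ball_subset_ball q.2.2.le)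
    · apply measure_mono
      intro x hx
      have : dist x m₀ < r := Metric.mem_ball.mp hx
      exact lt_of_le_of_lt (hgle x) (by rwa [dist_comm])

end Envelope

section Pi

variable {N : ℕ} {M : Fin N → Type*} [∀ i, MeasurableSpace (M i)]

/-- Tensorization of a sublevel-set comparison (per-coordinate doubling-type inequality). -/
theorem pi_sublevel_le (μ : ∀ i, Measure (M i)) [∀ i, SigmaFinite (μ i)]
    (a b : ∀ i, M i → ℝ) (ha : ∀ i, Measurable (a i)) (hb : ∀ i, Measurable (b i))
    (D : Fin N → ℝ≥0∞) (c : ℝ)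
    (hab : ∀ (i) (t : ℝ), μ i {y | a i y < t} ≤ D i * μ i {y | b i y < t}) :
    Measure.pi μ {x | ∑ i, a i (x i) < c} ≤
      (∏ i, D i) * Measure.pi μ {x | ∑ i, b i (x i) < c} := by
  classical
  rcases isEmpty_or_nonempty (∀ i, M i) with hE | hne
  · rw [Set.eq_empty_of_isEmpty {x : ∀ i, M i | ∑ i, a i (x i) < c}]
    simp
  obtain ⟨x₀⟩ := hne
  set F : Finset (Fin N) → (∀ i, M i) → ℝ≥0∞ := fun S =>
    Set.indicator {x | ∑ i, (S.piecewise a b) i (x i) < c} (1 : (∀ i, M i) → ℝ≥0∞) with hF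
  have hpmeas : ∀ (S : Finset (Fin N)) (i : Fin N), Measurable ((S.piecewise a b) i) := by
    intro S i
    by_cases hi : i ∈ S
    · rw [Finset.piecewise_eq_of_mem _ _ _ hi]; exact ha i
    · rw [Finset.piecewise_eq_of_notMem _ _ _ hi]; exact hb i
  have hsetmeas : ∀ S : Finset (Fin N),
      MeasurableSet {x : ∀ i, M i | ∑ i, (S.piecewise a b) i (x i) < c} := fun S =>
    measurableSet_lt
      (Finset.measurable_sum _ fun i _ => (hpmeas S i).comp (measurable_pi_apply i))
      measurable_const
  have hFmeas : ∀ S, Measurable (F S) := fun S =>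
    (measurable_const.indicator (hsetmeas S))
  -- one-coordinate replacement
  have key : ∀ (S : Finset (Fin N)) (j : Fin N), j ∉ S → ∀ x : ∀ i, M i,
      (∫⋯∫⁻_Finset.univ, F (insert j S) ∂μ) x ≤ D j * (∫⋯∫⁻_Finset.univ, F S ∂μ) x := by
    intro S j hj x
    have hsplit : ∀ (h : ∀ i, M i → ℝ) (z : ∀ i, M i) (y : M j),
        ∑ i, h i (update z j y i) = h j y + ∑ i ∈ Finset.univ.erase j, h i (z i) := by
      intro h z y
      rw [← Finset.add_sum_erase _ _ (Finset.mem_univ j)]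
      congr 1
      · rw [update_self]
      · exact Finset.sum_congr rfl fun i hi => by
          rw [update_of_ne (Finset.ne_of_mem_erase hi)]
    set K : (∀ i, M i) → ℝ :=
      fun z => ∑ i ∈ Finset.univ.erase j, (S.piecewise a b) i (z i) with hK
    have hmemeq : ∀ i ∈ Finset.univ.erase j,
        ((insert j S).piecewise a b) i = (S.piecewise a b) i := by
      intro i hi
      rw [Finset.piecewise_insert, update_of_ne (Finset.ne_of_mem_erase hi)]
    have e1 : ∀ (z : ∀ i, M i) (y : M j), F (insert j S) (update z j y) =
        Set.indicator {y' | a j y' < c - K z} (1 : M j → ℝ≥0∞) y := by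
      intro z y
      have hiff : (update z j y ∈ {x : ∀ i, M i | ∑ i, ((insert j S).piecewise a b) i (x i) < c})
          ↔ y ∈ {y' : M j | a j y' < c - K z} := by
        simp only [mem_setOf_eq, hsplit]
        rw [Finset.piecewise_eq_of_mem _ _ _ (Finset.mem_insert_self j S), hK]
        rw [Finset.sum_congr rfl fun i hi => by rw [hmemeq i hi]]
        exact (lt_sub_iff_add_lt).symm
      simp only [hF, Set.indicator_apply, Pi.one_apply]
      rw [if_congr hiff rfl rfl]
    have e2 : ∀ (z : ∀ i, M i) (y : M j), F S (update z j y) =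
        Set.indicator {y' | b j y' < c - K z} (1 : M j → ℝ≥0∞) y := by
      intro z y
      have hiff : (update z j y ∈ {x : ∀ i, M i | ∑ i, (S.piecewise a b) i (x i) < c})
          ↔ y ∈ {y' : M j | b j y' < c - K z} := by
        simp only [mem_setOf_eq, hsplit]
        rw [Finset.piecewise_eq_of_notMem _ _ _ hj]
        exact (lt_sub_iff_add_lt).symm
      simp only [hF, Set.indicator_apply, Pi.one_apply]
      rw [if_congr hiff rfl rfl]
    have h1 : ∀ z : ∀ i, M i,
        (∫⁻ y, F (insert j S) (update z j y) ∂μ j) ≤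
          D j * ∫⁻ y, F S (update z j y) ∂μ j := by
      intro z
      calc (∫⁻ y, F (insert j S) (update z j y) ∂μ j)
          = μ j {y' | a j y' < c - K z} := by
            simp_rw [e1 z]
            exact lintegral_indicator_one (measurableSet_lt (ha j) measurable_const)
        _ ≤ D j * μ j {y' | b j y' < c - K z} := hab j _
        _ = D j * ∫⁻ y, F S (update z j y) ∂μ j := by
            congr 1
            symm
            simp_rw [e2 z]
            exact lintegral_indicator_one (measurableSet_lt (hb j) measurable_const)
    have hbmeas : Measurable fun z : ∀ i, M i => ∫⁻ y, F S (update z j y) ∂μ j := by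
      have : (fun z : ∀ i, M i => ∫⁻ y, F S (update z j y) ∂μ j) =
          (∫⋯∫⁻_{j}, F S ∂μ) := by
        rw [lmarginal_singleton]
      rw [this]
      exact Measurable.lmarginal μ (hFmeas S)
    rw [lmarginal_erase' (s := Finset.univ) (F (insert j S)) (hFmeas _) (Finset.mem_univ j),
      lmarginal_erase' (s := Finset.univ) (F S) (hFmeas _) (Finset.mem_univ j)]
    calc (∫⋯∫⁻_Finset.univ.erase j,
            (fun z => ∫⁻ y, F (insert j S) (update z j y) ∂μ j) ∂μ) x
        ≤ (∫⋯∫⁻_Finset.univ.erase j,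
            (fun z => D j * ∫⁻ y, F S (update z j y) ∂μ j) ∂μ) x :=
          lmarginal_mono (fun z => h1 z) x
      _ = D j * (∫⋯∫⁻_Finset.univ.erase j,
            (fun z => ∫⁻ y, F S (update z j y) ∂μ j) ∂μ) x := by
          simp only [lmarginal]
          exact lintegral_const_mul _ (hbmeas.comp measurable_updateFinset)
  -- main induction over the set of replaced coordinates
  have heq : ∀ S : Finset (Fin N),
      Measure.pi μ {x | ∑ i, (S.piecewise a b) i (x i) < c} =
        (∫⋯∫⁻_Finset.univ, F S ∂μ) x₀ := by
    intro S
    rw [← lintegral_eq_lmarginal_univ x₀, hF, lintegral_indicator_one (hsetmeas S)]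
  have main : ∀ S : Finset (Fin N),
      Measure.pi μ {x | ∑ i, (S.piecewise a b) i (x i) < c} ≤
        (∏ i ∈ S, D i) * Measure.pi μ {x | ∑ i, b i (x i) < c} := by
    intro S
    induction S using Finset.induction_on with
    | empty => simp [Finset.piecewise_empty]
    | @insert j S hj IH =>
      calc Measure.pi μ {x | ∑ i, ((insert j S).piecewise a b) i (x i) < c}
          = (∫⋯∫⁻_Finset.univ, F (insert j S) ∂μ) x₀ := heq _
        _ ≤ D j * (∫⋯∫⁻_Finset.univ, F S ∂μ) x₀ := key S j hj x₀
        _ = D j * Measure.pi μ {x | ∑ i, (S.piecewise a b) i (x i) < c} := by rw [heq S]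
        _ ≤ D j * ((∏ i ∈ S, D i) * Measure.pi μ {x | ∑ i, b i (x i) < c}) :=
            mul_le_mul_right IH _
        _ = (∏ i ∈ insert j S, D i) * Measure.pi μ {x | ∑ i, b i (x i) < c} := by
            rw [Finset.prod_insert hj, mul_assoc]
  have := main Finset.univ
  rwa [show (Finset.univ.piecewise a b) = a from Finset.piecewise_univ a b] at this

/-- A product of measurable hulls is almost surely contained in any measurable set
containing the product of the original sets. -/
theorem pi_toMeasurable_diff_null (μ : ∀ i, Measure (M i)) [∀ i, SigmaFinite (μ i)]
    (s : ∀ i, Set (M i)) (T : Set (∀ i, M i)) (hT : MeasurableSet T)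
    (hsT : Set.pi Set.univ s ⊆ T) :
    Measure.pi μ (Set.pi Set.univ (fun i => toMeasurable (μ i) (s i)) \ T) = 0 := by
  classical
  rcases isEmpty_or_nonempty (∀ i, M i) with hE | hne
  · rw [Set.eq_empty_of_isEmpty (Set.pi Set.univ (fun i => toMeasurable (μ i) (s i)) \ T)]
    simp
  obtain ⟨x₀⟩ := hne
  set χ : (∀ i, M i) → ℝ≥0∞ :=
    Set.indicator (Set.pi Set.univ (fun i => toMeasurable (μ i) (s i)) \ T)
      (1 : (∀ i, M i) → ℝ≥0∞) with hχ
  have hPmeas : MeasurableSet (Set.pi Set.univ (fun i => toMeasurable (μ i) (s i)) \ T) :=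
    (MeasurableSet.univ_pi fun i => measurableSet_toMeasurable _ _).diff hT
  have hχmeas : Measurable χ := measurable_const.indicator hPmeas
  have claim : ∀ S : Finset (Fin N), ∀ x : ∀ i, M i,
      (∀ i, i ∉ S → x i ∈ s i) → (∫⋯∫⁻_S, χ ∂μ) x = 0 := by
    intro S
    induction S using Finset.induction_on with
    | empty =>
      intro x hx
      rw [lmarginal_empty]
      have hxT : x ∈ T := hsT fun i _ => hx i (Finset.notMem_empty i)
      exact Set.indicator_of_notMem (fun h => h.2 hxT) _
    | @insert j S hj IH =>
      intro x hx
      rw [lmarginal_insert χ hχmeas hj x]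
      set ϑ : M j → ℝ≥0∞ := fun y => (∫⋯∫⁻_S, χ ∂μ) (update x j y) with hϑ
      have hϑmeas : Measurable ϑ := (Measurable.lmarginal μ hχmeas).comp (measurable_update x)
      have hvan1 : ∀ y ∈ s j, ϑ y = 0 := by
        intro y hy
        apply IH
        intro i hi
        by_cases h : i = j
        · subst h; rw [update_self]; exact hy
        · rw [update_of_ne h]
          exact hx i (by simp [Finset.mem_insert, h, hi])
      have hvan2 : ∀ y, y ∉ toMeasurable (μ j) (s j) → ϑ y = 0 := by
        intro y hy
        rw [hϑ]
        simp only [lmarginal]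
        have : ∀ w, χ (updateFinset (update x j y) S w) = 0 := by
          intro w
          apply Set.indicator_of_notMem
          intro hmem
          apply hy
          have hjval : updateFinset (update x j y) S w j = y := by
            rw [updateFinset]
            simp [hj, update_self]
          have := hmem.1 j (Set.mem_univ j)
          rwa [hjval] at this
        simp only [this]
        exact lintegral_zero
      have hnull : μ j {y | ϑ y ≠ 0} = 0 := by
        have hms : MeasurableSet {y | ϑ y ≠ 0} :=
          (hϑmeas (measurableSet_singleton 0)).compl
        have h1 : {y | ϑ y ≠ 0} ⊆ toMeasurable (μ j) (s j) ∩ {y | ϑ y ≠ 0} := by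
          intro y hy
          refine ⟨?_, hy⟩
          by_contra hc
          exact hy (hvan2 y hc)
        have h2 : μ j (toMeasurable (μ j) (s j) ∩ {y | ϑ y ≠ 0}) =
            μ j (s j ∩ {y | ϑ y ≠ 0}) :=
          Measure.measure_toMeasurable_inter_of_sFinite hms (s j)
        have h3 : s j ∩ {y | ϑ y ≠ 0} = ∅ := by
          ext y
          simp only [mem_inter_iff, mem_setOf_eq, mem_empty_iff_false, iff_false, not_and]
          intro hy hc
          exact hc (hvan1 y hy)
        refine le_zero_iff.mp ?_
        calc μ j {y | ϑ y ≠ 0} ≤ μ j (toMeasurable (μ j) (s j) ∩ {y | ϑ y ≠ 0}) :=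
              measure_mono h1
          _ = μ j (s j ∩ {y | ϑ y ≠ 0}) := h2
          _ = 0 := by rw [h3, measure_empty]
      rw [lintegral_eq_zero_iff hϑmeas]
      exact ae_iff.mpr hnull
  have h0 : (∫⋯∫⁻_Finset.univ, χ ∂μ) x₀ = 0 :=
    claim Finset.univ x₀ (fun i hi => absurd (Finset.mem_univ i) hi)
  calc Measure.pi μ (Set.pi Set.univ (fun i => toMeasurable (μ i) (s i)) \ T)
      = ∫⁻ x, χ x ∂Measure.pi μ := (lintegral_indicator_one hPmeas).symm
    _ = (∫⋯∫⁻_Finset.univ, χ ∂μ) x₀ := lintegral_eq_lmarginal_univ x₀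
    _ = 0 := h0

end Pi

end Stmt15Aux

/-- If each family `{μ_m^i}` on `(M_i, d_i)` is uniformly doubling with constant `D_i`,
then on the `p`-direct sum (with balls `B_R(m) = {m' : ∑ d_i(m_i,m_i')^p < R^p}`) the
tensor-product measures `μ_m = ⊗_i μ_{m_i}^i` are uniformly doubling with constant
`∏_i D_i`. -/
theorem stmt_15 {N : ℕ} (p : ℝ) (hp : 1 ≤ p)
    (M : Fin N → Type*) [∀ i, MeasurableSpace (M i)] [∀ i, MetricSpace (M i)]
    (μ : ∀ i, M i → Measure (M i)) [∀ i m, SigmaFinite (μ i m)]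
    (D : Fin N → ENNReal)
    (hD : ∀ (i : Fin N) (m : M i) (R : ℝ), 0 < R →
      μ i m (Metric.ball m (2 * R)) ≤ D i * μ i m (Metric.ball m R)) :
    ∀ (m : ∀ i, M i) (R : ℝ), 0 < R →
      Measure.pi (fun i => μ i (m i))
          {m' : ∀ i, M i | ∑ i, dist (m i) (m' i) ^ p < (2 * R) ^ p} ≤
        (∏ i, D i) *
          Measure.pi (fun i => μ i (m i))
            {m' : ∀ i, M i | ∑ i, dist (m i) (m' i) ^ p < R ^ p} := by
  intro m R hR
  have hp0 : (0 : ℝ) < p := lt_of_lt_of_le one_pos hp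
  classical
  choose g W hgmeas hg0 hgle hgm hWtm hglt using
    fun i => Stmt15Aux.exists_envelope (μ i (m i)) (m i)
  set ν : ∀ i, Measure (M i) := fun i => μ i (m i) with hν
  set B2 : Set (∀ i, M i) := {m' | ∑ i, dist (m i) (m' i) ^ p < (2 * R) ^ p} with hB2
  set B1 : Set (∀ i, M i) := {m' | ∑ i, dist (m i) (m' i) ^ p < R ^ p} with hB1
  set A2 : Set (∀ i, M i) := {x | ∑ i, (g i (x i)) ^ p < (2 * R) ^ p} with hA2
  set A1 : Set (∀ i, M i) := {x | ∑ i, (g i (x i)) ^ p < R ^ p} with hA1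
  have step1 : Measure.pi ν B2 ≤ Measure.pi ν A2 := by
    apply measure_mono
    intro x hx
    simp only [hB2, mem_setOf_eq] at hx
    simp only [hA2, mem_setOf_eq]
    refine lt_of_le_of_lt (Finset.sum_le_sum fun i _ => ?_) hx
    exact Real.rpow_le_rpow (hg0 i (x i)) (hgle i (x i)) hp0.le
  have step2 : Measure.pi ν A2 ≤ (∏ i, D i) * Measure.pi ν A1 := by
    have h2p : (0 : ℝ) < 2 ^ p := Real.rpow_pos_of_pos two_pos p
    have hmain := Stmt15Aux.pi_sublevel_le ν
      (fun i y => g i y ^ p) (fun i y => (2 * g i y) ^ p)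
      (fun i => (Real.continuous_rpow_const hp0.le).measurable.comp (hgmeas i))
      (fun i => (Real.continuous_rpow_const hp0.le).measurable.comp ((hgmeas i).const_mul 2))
      D ((2 * R) ^ p) ?_
    · have hseteq : {x : ∀ i, M i | ∑ i, (2 * g i (x i)) ^ p < (2 * R) ^ p} = A1 := by
        ext x
        simp only [hA1, mem_setOf_eq]
        rw [Real.mul_rpow two_pos.le hR.le]
        have hterm : ∀ i, (2 * g i (x i)) ^ p = 2 ^ p * g i (x i) ^ p := fun i =>
          Real.mul_rpow two_pos.le (hg0 i (x i))
        simp_rw [hterm, ← Finset.mul_sum]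
        exact mul_lt_mul_iff_right₀ h2p
      rwa [hseteq] at hmain
    · intro i t
      rcases le_or_gt t 0 with ht | ht
      · have hem : {y | g i y ^ p < t} = ∅ := by
          apply eq_empty_iff_forall_notMem.mpr
          intro y hy
          exact absurd (lt_of_lt_of_le hy ht) (not_lt.mpr (Real.rpow_nonneg (hg0 i y) p))
        simp [hem]
      · set r := t ^ p⁻¹ with hr
        have hrpos : 0 < r := Real.rpow_pos_of_pos ht _
        have hrt : r ^ p = t := Real.rpow_inv_rpow ht.le (ne_of_gt hp0)
        have e1 : {y | g i y ^ p < t} = {y | g i y < r} := by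
          ext y
          rw [mem_setOf_eq, mem_setOf_eq, ← hrt,
            Real.rpow_lt_rpow_iff (hg0 i y) hrpos.le hp0]
        have e2 : {y | (2 * g i y) ^ p < t} = {y | g i y < r / 2} := by
          ext y
          rw [mem_setOf_eq, mem_setOf_eq, ← hrt,
            Real.rpow_lt_rpow_iff (mul_nonneg two_pos.le (hg0 i y)) hrpos.le hp0]
          constructor <;> intro h <;> linarith
        rw [e1, e2, hgm i r, hgm i (r / 2)]
        have hd := hD i (m i) (r / 2) (by positivity)
        rwa [show 2 * (r / 2) = r by ring] at hd
  have step3 : Measure.pi ν A1 ≤ Measure.pi ν B1 := by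
    set T := toMeasurable (Measure.pi ν) B1 with hT
    have hTmeas : MeasurableSet T := measurableSet_toMeasurable _ _
    have hB1T : B1 ⊆ T := subset_toMeasurable _ _
    have hcover : A1 ⊆ T ∪
        ⋃ q : {q : Fin N → ℚ // (∀ i, 0 ≤ (q i : ℝ)) ∧ ∑ i, (q i : ℝ) ^ p < R ^ p},
          ((Set.pi Set.univ fun i => toMeasurable (ν i) (Metric.ball (m i) ((q.1 i : ℝ)))) \ T) := by
      intro x hx
      by_cases hxT : x ∈ T
      · exact Or.inl hxT
      · right
        have hx' : ∑ i, g i (x i) ^ p < R ^ p := hx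
        have hcont : Tendsto (fun δ : ℝ => ∑ i, (g i (x i) + δ) ^ p) (nhds 0)
            (nhds (∑ i, g i (x i) ^ p)) := by
          have hterm : ∀ i ∈ Finset.univ, Tendsto (fun δ : ℝ => (g i (x i) + δ) ^ p)
              (nhds 0) (nhds (g i (x i) ^ p)) := by
            intro i _
            have h1 : ContinuousAt (fun s : ℝ => s ^ p) (g i (x i) + 0) :=
              Real.continuousAt_rpow_const _ p (Or.inr hp0.le)
            have h2 : ContinuousAt (fun δ : ℝ => g i (x i) + δ) 0 :=
              (continuous_const.add continuous_id).continuousAt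
            have h3 := h1.comp h2
            simpa [Function.comp_def, add_zero] using h3.tendsto
          simpa using tendsto_finset_sum Finset.univ hterm
        have hev := hcont.eventually_lt_const hx'
        obtain ⟨ε, hε, hball⟩ := Metric.eventually_nhds_iff.mp hev
        have hδpos : (0 : ℝ) < ε / 2 := half_pos hε
        set δ := ε / 2 with hδ
        have hδsum : ∑ i, (g i (x i) + δ) ^ p < R ^ p := by
          apply hball
          rw [Real.dist_eq, sub_zero, abs_of_pos hδpos]
          linarith
        have hq : ∀ i, ∃ q : ℚ, 0 ≤ (q : ℝ) ∧ (q : ℝ) < g i (x i) + δ ∧ x i ∈ W i q :=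
          fun i => hglt i (x i) _ (lt_add_of_pos_right _ hδpos)
        choose q hq0 hqlt hqW using hq
        have hqsum : ∑ i, (q i : ℝ) ^ p < R ^ p :=
          lt_of_le_of_lt (Finset.sum_le_sum fun i _ =>
            Real.rpow_le_rpow (hq0 i) (hqlt i).le hp0.le) hδsum
        refine mem_iUnion.mpr ⟨⟨q, hq0, hqsum⟩, ?_, hxT⟩
        intro i _
        exact hWtm i (q i) (hqW i)
    have hnull : Measure.pi ν
        (⋃ q : {q : Fin N → ℚ // (∀ i, 0 ≤ (q i : ℝ)) ∧ ∑ i, (q i : ℝ) ^ p < R ^ p},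
          ((Set.pi Set.univ fun i => toMeasurable (ν i) (Metric.ball (m i) ((q.1 i : ℝ)))) \ T))
        = 0 := by
      refine measure_iUnion_null fun q => ?_
      refine Stmt15Aux.pi_toMeasurable_diff_null ν
        (fun i => Metric.ball (m i) ((q.1 i : ℝ))) T hTmeas ?_
      intro x hx
      apply hB1T
      show ∑ i, dist (m i) (x i) ^ p < R ^ p
      refine lt_of_le_of_lt (Finset.sum_le_sum fun i _ => ?_) q.2.2
      have hxi : dist (x i) (m i) < (q.1 i : ℝ) := Metric.mem_ball.mp (hx i (Set.mem_univ i))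
      rw [dist_comm]
      exact Real.rpow_le_rpow dist_nonneg hxi.le hp0.le
    calc Measure.pi ν A1 ≤ Measure.pi ν (T ∪ _) := measure_mono hcover
      _ ≤ Measure.pi ν T + Measure.pi ν _ := measure_union_le _ _
      _ = Measure.pi ν B1 := by rw [hnull, add_zero, hT, measure_toMeasurable]
  calc Measure.pi ν B2 ≤ Measure.pi ν A2 := step1
    _ ≤ (∏ i, D i) * Measure.pi ν A1 := step2
    _ ≤ (∏ i, D i) * Measure.pi ν B1 := mul_le_mul_right step3 _
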